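/- Let X be a real Banach space with dim X ≥ 2 that is r-convex for some r ∈ [2,∞), i.e. there exists K > 0 with δ_X(ε) ≥ Kε^r for all ε ∈ [0,2]. Let p > 1, F(x) = (1/p)‖x‖^p, and j_p : X → X* a selection of the duality mapping. If p = r, there exists C > 0 such that Δ_F^{j_p(x)}(y,x) ≥ C‖x−y‖^r for all x, y ∈ X. If p ≠ r, then for every τ̄ > 0 there exists C_τ̄ > 0 such that Δ_F^{j_p(x)}(y,x) ≥ C_τ̄ ‖x‖^{p−r}‖x−y‖^r for all x ≠ 0 and y ∈ X with ‖x−y‖ ≤ τ̄‖x‖. -/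

import Mathlib

open scoped ENNReal

/-- The modulus of smoothness of a normed space `Y`:
`ρ_Y(τ) = sup {(‖x+τy‖+‖x−τy‖)/2 − 1 : x, y ∈ S_Y}`. -/
noncomputable def rhoSpace (Y : Type*) [NormedAddCommGroup Y] [NormedSpace ℝ Y] (τ : ℝ) : ℝ :=
  sSup {r : ℝ | ∃ x y : Y, ‖x‖ = 1 ∧ ‖y‖ = 1 ∧ r = (‖x + τ • y‖ + ‖x - τ • y‖) / 2 - 1}

/-- The modulus of convexity of a normed space `Y`:
`δ_Y(ε) = inf {1 − ‖y+ỹ‖/2 : y, ỹ ∈ S_Y, ‖y−ỹ‖ = ε}`. -/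
noncomputable def deltaSpace (Y : Type*) [NormedAddCommGroup Y] [NormedSpace ℝ Y] (ε : ℝ) : ℝ :=
  sInf {r : ℝ | ∃ y z : Y, ‖y‖ = 1 ∧ ‖z‖ = 1 ∧ ‖y - z‖ = ε ∧ r = 1 - ‖y + z‖ / 2}

/-- `φ` is a subgradient of `F` at `x`: `F(y) ≥ F(x) + ⟨φ, y−x⟩` for all `y`. -/
def IsSubgradient {X : Type*} [NormedAddCommGroup X] [NormedSpace ℝ X]
    (F : X → ℝ) (x : X) (φ : X →L[ℝ] ℝ) : Prop :=
  ∀ y : X, F x + φ (y - x) ≤ F y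

/-- The linearization error (Bregman divergence)
`Δ_F^{φ}(y,x) = F(y) − F(x) − ⟨φ, y−x⟩`. -/
def breg {X : Type*} [NormedAddCommGroup X] [NormedSpace ℝ X]
    (F : X → ℝ) (φ : X →L[ℝ] ℝ) (y x : X) : ℝ :=
  F y - F x - φ (y - x)

/-- The modulus of smoothness of `F` at `x` w.r.t. `φ`, with values in `[0,∞]`:
`ρ_{F,x}^{φ}(τ) = sup {|Δ_F^{φ}(y,x)| : ‖y−x‖ = τ}`. -/
noncomputable def rhoF {X : Type*} [NormedAddCommGroup X] [NormedSpace ℝ X]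
    (F : X → ℝ) (x : X) (φ : X →L[ℝ] ℝ) (τ : ℝ) : ℝ≥0∞ :=
  ⨆ y ∈ {y : X | ‖y - x‖ = τ}, ENNReal.ofReal |breg F φ y x|

/-- The modulus of convexity of `F` at `x` w.r.t. `φ`, with values in `[0,∞]`:
`δ_{F,x}^{φ}(τ) = inf {|Δ_F^{φ}(y,x)| : ‖y−x‖ = τ}`. -/
noncomputable def deltaF {X : Type*} [NormedAddCommGroup X] [NormedSpace ℝ X]
    (F : X → ℝ) (x : X) (φ : X →L[ℝ] ℝ) (τ : ℝ) : ℝ≥0∞ :=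
  ⨅ y ∈ {y : X | ‖y - x‖ = τ}, ENNReal.ofReal |breg F φ y x|

/-- `jp` is a selection of the duality mapping with exponent `p`:
`⟨j_p(x), x⟩ = ‖j_p(x)‖·‖x‖` and `‖j_p(x)‖ = ‖x‖^{p−1}` for every `x`. -/
def IsDualitySelection {X : Type*} [NormedAddCommGroup X] [NormedSpace ℝ X]
    (p : ℝ) (jp : X → X →L[ℝ] ℝ) : Prop :=
  ∀ x : X, jp x x = ‖jp x‖ * ‖x‖ ∧ ‖jp x‖ = ‖x‖ ^ (p - 1)


set_option maxHeartbeats 1000000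

section Stmt19Scalar


noncomputable def stmtPsi (p t : ℝ) : ℝ := t ^ p / p + (p - 1) / p - t

lemma stmt19_rpow_succ {p u : ℝ} (hp : 1 < p) (hu : 0 ≤ u) :
    u ^ (p - 1) * u = u ^ p := by
  rcases eq_or_lt_of_le hu with h | h
  · rw [← h, Real.zero_rpow (by linarith), Real.zero_rpow (by linarith), mul_zero]
  · rw [show p = (p - 1) + 1 by ring, Real.rpow_add_one h.ne', sub_add_cancel]

lemma stmt19_young {p t u : ℝ} (hp : 1 < p) (ht : 0 ≤ t) (hu : 0 ≤ u) :
    u ^ (p - 1) * t ≤ t ^ p / p + ((p - 1) / p) * u ^ p := by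
  have hpq : p.HolderConjugate (p / (p - 1)) := Real.HolderConjugate.conjExponent hp
  have h := Real.young_inequality_of_nonneg ht (Real.rpow_nonneg hu (p - 1)) hpq
  have hp1 : p - 1 ≠ 0 := by intro h'; rw [sub_eq_zero] at h'; exact (by linarith : p ≠ 1) h'
  have h1 : (u ^ (p - 1)) ^ (p / (p - 1)) = u ^ p := by
    rw [← Real.rpow_mul hu]
    congr 1
    field_simp
  rw [h1] at h
  have hp0 : (0:ℝ) < p := by linarith
  calc u ^ (p - 1) * t = t * u ^ (p - 1) := by ring
    _ ≤ t ^ p / p + u ^ p / (p / (p - 1)) := h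
    _ = t ^ p / p + ((p - 1) / p) * u ^ p := by
        rw [div_div_eq_mul_div]
        field_simp

lemma stmt19_psi_nonneg {p t : ℝ} (hp : 1 < p) (ht : 0 ≤ t) : 0 ≤ stmtPsi p t := by
  have h := stmt19_young hp ht (by norm_num : (0:ℝ) ≤ 1)
  simp only [Real.one_rpow, one_mul] at h
  simp only [stmtPsi]
  linarith

lemma stmt19_psi_grad {p t u : ℝ} (hp : 1 < p) (ht : 0 ≤ t) (hu : 0 ≤ u) :
    (u ^ (p - 1) - 1) * (t - u) + stmtPsi p u ≤ stmtPsi p t := by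
  have h := stmt19_young hp ht hu
  have h2 := stmt19_rpow_succ hp hu
  have hp0 : (0:ℝ) < p := by linarith
  simp only [stmtPsi]
  have hup : u ^ p / p + ((p-1)/p) * u ^ p = u ^ p := by field_simp; ring
  nlinarith [h, h2]

lemma stmt19_psi_left {p h : ℝ} (hp : 1 < p) (h0 : 0 ≤ h) (h1 : h ≤ 1) :
    min 1 (p - 1) * (h * h) / 4 ≤ stmtPsi p (1 - h) := by
  have hu : (0:ℝ) ≤ 1 - h / 2 := by linarith
  have hg := stmt19_psi_grad hp (t := 1 - h) (u := 1 - h / 2) (by linarith) hu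
  have hpsu := stmt19_psi_nonneg hp hu
  have key : min 1 (p - 1) * (h / 2) ≤ 1 - (1 - h / 2) ^ (p - 1) := by
    rcases le_or_gt 2 p with hp2 | hp2
    · have hle : (1 - h / 2) ^ (p - 1) ≤ (1 - h / 2) ^ (1:ℝ) :=
        Real.rpow_le_rpow_of_exponent_ge (by linarith) (by linarith) (by linarith)
      rw [Real.rpow_one] at hle
      have hm : min 1 (p - 1) ≤ 1 := min_le_left _ _
      nlinarith
    · have hb : (1 - h / 2) ^ (p - 1) ≤ 1 + (p - 1) * (-(h / 2)) := by
        have := rpow_one_add_le_one_add_mul_self (s := -(h / 2)) (by linarith)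
          (p := p - 1) (by linarith) (by linarith)
        convert this using 2 <;> ring
      have hm : min 1 (p - 1) ≤ p - 1 := min_le_right _ _
      have hm0 : 0 ≤ min 1 (p-1) := le_min (by norm_num) (by linarith)
      nlinarith
  have hk2 := mul_le_mul_of_nonneg_right key (by linarith : (0:ℝ) ≤ h / 2)
  nlinarith [hg, hpsu, hk2]

lemma stmt19_psi_right {p h : ℝ} (hp : 1 < p) (h0 : 0 ≤ h) :
    (p - 1) * (h * h) ≤ 4 * (1 + h / 2) * stmtPsi p (1 + h) := by
  have hu : (0:ℝ) ≤ 1 + h / 2 := by linarith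
  have hg := stmt19_psi_grad hp (t := 1 + h) (u := 1 + h / 2) (by linarith) hu
  have hpsu := stmt19_psi_nonneg hp hu
  have hpst := stmt19_psi_nonneg hp (t := 1 + h) (by linarith)
  have hB : 1 + p * (h / 2) ≤ (1 + h / 2) ^ p :=
    one_add_mul_self_le_rpow_one_add (by linarith) hp.le
  have hs := stmt19_rpow_succ hp hu
  -- (1+h/2) * ((1+h/2)^(p-1) - 1) ≥ (p-1)*(h/2)
  have h2 : (p - 1) * (h / 2) ≤ (1 + h / 2) * ((1 + h / 2) ^ (p - 1) - 1) := by
    nlinarith [hB, hs]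
  -- psi(1+h) ≥ ((1+h/2)^(p-1) - 1) * (h/2)
  have h3 : ((1 + h / 2) ^ (p - 1) - 1) * (h / 2) ≤ stmtPsi p (1 + h) := by
    nlinarith [hg, hpsu]
  nlinarith [mul_le_mul_of_nonneg_right h2 h0, mul_le_mul_of_nonneg_left h3 (by linarith : (0:ℝ) ≤ 4 * (1 + h/2)), hpst]

lemma stmt19_c2_pos {p : ℝ} (hp2 : 2 ≤ p) : 0 < 1 / p - 3 ^ ((1:ℝ) - p) := by
  have hp1 : 1 ≤ p - 1 := by linarith
  have h1 : p ≤ 2 ^ (p - 1) := by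
    have := one_add_mul_self_le_rpow_one_add (s := 1) (by norm_num) hp1
    norm_num at this
    linarith
  have h2 : (2:ℝ) ^ (p - 1) < 3 ^ (p - 1) :=
    Real.rpow_lt_rpow (by norm_num) (by norm_num) (by linarith)
  have h3 : p < 3 ^ (p - 1) := lt_of_le_of_lt h1 h2
  have hp0 : (0:ℝ) < p := by linarith
  have : (3:ℝ) ^ ((1:ℝ) - p) = ((3:ℝ) ^ (p - 1))⁻¹ := by
    rw [show (1:ℝ) - p = -(p - 1) by ring, Real.rpow_neg (by norm_num)]
  rw [this]
  have := inv_strictAnti₀ hp0 h3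
  rw [one_div]
  linarith

lemma stmt19_psi_big {p t : ℝ} (hp2 : 2 ≤ p) (ht : 3 ≤ t) :
    (1 / p - 3 ^ ((1:ℝ) - p)) * t ^ p ≤ stmtPsi p t := by
  have hp : 1 < p := by linarith
  have ht0 : (0:ℝ) < t := by linarith
  have h1 : t ^ ((1:ℝ) - p) ≤ 3 ^ ((1:ℝ) - p) := by
    rw [show (1:ℝ) - p = -(p - 1) by ring, Real.rpow_neg (by norm_num : (0:ℝ) ≤ 3),
      Real.rpow_neg ht0.le]
    exact inv_anti₀ (Real.rpow_pos_of_pos (by norm_num) _)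
      (Real.rpow_le_rpow (by norm_num) ht (by linarith))
  have h2 : t = t ^ p * t ^ ((1:ℝ) - p) := by
    rw [← Real.rpow_add ht0]
    norm_num
  have htp : (0:ℝ) < t ^ p := Real.rpow_pos_of_pos ht0 _
  have h4 := mul_le_mul_of_nonneg_left h1 htp.le
  simp only [stmtPsi]
  have hp0 : (0:ℝ) < p := by linarith
  have h5 : 0 ≤ (p - 1) / p := div_nonneg (by linarith) hp0.le
  have h6 : (1 / p - 3 ^ ((1:ℝ) - p)) * t ^ p = t ^ p / p - t ^ p * 3 ^ ((1:ℝ) - p) := by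
    ring
  linarith [h2, h4, h5, h6]

end Stmt19Scalar

section Stmt19Vec
variable {X : Type*} [NormedAddCommGroup X] [NormedSpace ℝ X]

lemma stmt19_sphere {K r : ℝ}
    (hΔ : ∀ ε : ℝ, 0 ≤ ε → ε ≤ 2 → K * ε ^ r ≤ deltaSpace X ε)
    {u v : X} (hu : ‖u‖ = 1) (hv : ‖v‖ = 1) :
    ‖u + v‖ ≤ 2 - 2 * (K * ‖u - v‖ ^ r) := by
  have hη2 : ‖u - v‖ ≤ 2 := by
    have := norm_sub_le u v
    rw [hu, hv] at this
    linarith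
  have hbdd : BddBelow {s : ℝ | ∃ y z : X, ‖y‖ = 1 ∧ ‖z‖ = 1 ∧ ‖y - z‖ = ‖u - v‖ ∧
      s = 1 - ‖y + z‖ / 2} := by
    refine ⟨0, fun w hw => ?_⟩
    obtain ⟨y, z, hy, hz, -, rfl⟩ := hw
    have := norm_add_le y z
    rw [hy, hz] at this
    linarith
  have hmem : (1 - ‖u + v‖ / 2) ∈ {s : ℝ | ∃ y z : X, ‖y‖ = 1 ∧ ‖z‖ = 1 ∧ ‖y - z‖ = ‖u - v‖ ∧
      s = 1 - ‖y + z‖ / 2} := ⟨u, v, hu, hv, rfl, rfl⟩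
  have h1 : deltaSpace X ‖u - v‖ ≤ 1 - ‖u + v‖ / 2 := csInf_le hbdd hmem
  have h2 := hΔ ‖u - v‖ (norm_nonneg _) hη2
  linarith

lemma stmt19_jpx {p : ℝ} (hp : 1 < p) {jp : X → X →L[ℝ] ℝ}
    (hjp : ∀ x : X, jp x x = ‖jp x‖ * ‖x‖ ∧ ‖jp x‖ = ‖x‖ ^ (p - 1)) (x : X) :
    jp x x = ‖x‖ ^ p := by
  rw [(hjp x).1, (hjp x).2]
  exact stmt19_rpow_succ hp (norm_nonneg x)

lemma stmt19_jp_le {p : ℝ} {jp : X → X →L[ℝ] ℝ}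
    (hjp : ∀ x : X, jp x x = ‖jp x‖ * ‖x‖ ∧ ‖jp x‖ = ‖x‖ ^ (p - 1)) (x y : X) :
    jp x y ≤ ‖x‖ ^ (p - 1) * ‖y‖ := by
  have h := (jp x).le_opNorm y
  rw [(hjp x).2] at h
  calc jp x y ≤ ‖jp x y‖ := le_abs_self _
    _ = ‖(jp x) y‖ := rfl
    _ ≤ ‖x‖ ^ (p - 1) * ‖y‖ := h

lemma stmt19_jp_strong {p K r : ℝ} (hp : 1 < p)
    (hΔ : ∀ ε : ℝ, 0 ≤ ε → ε ≤ 2 → K * ε ^ r ≤ deltaSpace X ε)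
    {jp : X → X →L[ℝ] ℝ}
    (hjp : ∀ x : X, jp x x = ‖jp x‖ * ‖x‖ ∧ ‖jp x‖ = ‖x‖ ^ (p - 1))
    {x y : X} (hx : x ≠ 0) (hy : y ≠ 0) :
    jp x y ≤ ‖x‖ ^ (p - 1) * ‖y‖ *
      (1 - 2 * (K * ‖‖x‖⁻¹ • x - ‖y‖⁻¹ • y‖ ^ r)) := by
  set u := ‖x‖⁻¹ • x with hu_def
  set v := ‖y‖⁻¹ • y with hv_def
  have ha : (0:ℝ) < ‖x‖ := norm_pos_iff.mpr hx
  have hb : (0:ℝ) < ‖y‖ := norm_pos_iff.mpr hy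
  have hu : ‖u‖ = 1 := by
    rw [hu_def, norm_smul, norm_inv, norm_norm, inv_mul_cancel₀ ha.ne']
  have hv : ‖v‖ = 1 := by
    rw [hv_def, norm_smul, norm_inv, norm_norm, inv_mul_cancel₀ hb.ne']
  have hsum := stmt19_sphere hΔ hu hv
  have h1 : jp x (u + v) ≤ ‖x‖ ^ (p - 1) * (2 - 2 * (K * ‖u - v‖ ^ r)) := by
    calc jp x (u + v) ≤ ‖x‖ ^ (p - 1) * ‖u + v‖ := stmt19_jp_le hjp x (u + v)
      _ ≤ ‖x‖ ^ (p - 1) * (2 - 2 * (K * ‖u - v‖ ^ r)) :=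
        mul_le_mul_of_nonneg_left hsum (Real.rpow_nonneg (norm_nonneg x) _)
  have h2 : jp x u = ‖x‖ ^ (p - 1) := by
    rw [hu_def, map_smul, smul_eq_mul, stmt19_jpx hp hjp x,
      ← stmt19_rpow_succ hp (norm_nonneg x)]
    field_simp
  have h3 : jp x v ≤ ‖x‖ ^ (p - 1) * (1 - 2 * (K * ‖u - v‖ ^ r)) := by
    have : jp x (u + v) = jp x u + jp x v := map_add _ _ _
    rw [this, h2] at h1
    linarith [h1]
  have hyv : y = ‖y‖ • v := by
    rw [hv_def, smul_smul, mul_inv_cancel₀ hb.ne', one_smul]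
  calc jp x y = ‖y‖ * jp x v := by rw [hyv]; rw [map_smul, smul_eq_mul]; rw [← hyv]
    _ ≤ ‖y‖ * (‖x‖ ^ (p - 1) * (1 - 2 * (K * ‖u - v‖ ^ r))) :=
      mul_le_mul_of_nonneg_left h3 (norm_nonneg y)
    _ = ‖x‖ ^ (p - 1) * ‖y‖ * (1 - 2 * (K * ‖u - v‖ ^ r)) := by ring

lemma stmt19_breg_eq {p : ℝ} (hp : 1 < p) {jp : X → X →L[ℝ] ℝ}
    (hjp : ∀ x : X, jp x x = ‖jp x‖ * ‖x‖ ∧ ‖jp x‖ = ‖x‖ ^ (p - 1)) (x y : X) :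
    breg (fun z : X => (1 / p) * ‖z‖ ^ p) (jp x) y x
      = ‖y‖ ^ p / p + ((p - 1) / p) * ‖x‖ ^ p - jp x y := by
  have hp0 : p ≠ 0 := by linarith
  simp only [breg]
  rw [map_sub, stmt19_jpx hp hjp x]
  field_simp
  ring

lemma stmt19_core {p r K : ℝ} (hp : 1 < p) (hr : 2 ≤ r) (hK : 0 < K)
    (hΔ : ∀ ε : ℝ, 0 ≤ ε → ε ≤ 2 → K * ε ^ r ≤ deltaSpace X ε)
    {jp : X → X →L[ℝ] ℝ}
    (hjp : ∀ x : X, jp x x = ‖jp x‖ * ‖x‖ ∧ ‖jp x‖ = ‖x‖ ^ (p - 1))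
    {S : ℝ} (hS : 1 ≤ S) :
    ∃ C : ℝ, 0 < C ∧ ∀ x y : X, x ≠ 0 → 0 < ‖x - y‖ → ‖x - y‖ ≤ S * ‖x‖ →
      C * (‖x‖ ^ (p - r) * ‖x - y‖ ^ r) ≤
        breg (fun z : X => (1 / p) * ‖z‖ ^ p) (jp x) y x := by
  have hp0 : (0:ℝ) < p := by linarith
  have hS0 : (0:ℝ) < S := by linarith
  set cA := min 1 (p - 1) / (16 * (1 + S / 2)) with hcA_def
  have hcA : 0 < cA := div_pos (lt_min (by norm_num) (by linarith)) (by linarith)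
  set CA := cA * S ^ ((2:ℝ) - r) with hCA_def
  have hCA : 0 < CA := mul_pos hcA (Real.rpow_pos_of_pos hS0 _)
  set CB := 2 * K / (3 * 2 ^ r) with hCB_def
  have h2r : (0:ℝ) < 2 ^ r := Real.rpow_pos_of_pos (by norm_num) _
  have hCB : 0 < CB := div_pos (by linarith) (by linarith)
  refine ⟨min CA CB, lt_min hCA hCB, fun x y hx hε hεS => ?_⟩
  set a := ‖x‖ with ha_def
  set b := ‖y‖ with hb_def
  set ε := ‖x - y‖ with hε_def
  have ha : 0 < a := norm_pos_iff.mpr hx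
  set s := ε / a with hs_def
  have hs : 0 < s := div_pos hε ha
  have hsS : s ≤ S := by
    rw [hs_def, div_le_iff₀ ha]
    linarith [hεS]
  have hkey : a ^ (p - r) * ε ^ r = a ^ p * s ^ r := by
    rw [hs_def, Real.div_rpow (norm_nonneg _) (norm_nonneg _), Real.rpow_sub ha]
    have har : (0:ℝ) < a ^ r := Real.rpow_pos_of_pos ha _
    field_simp
    rw [← ha_def, ← hε_def]; ring
  have hΔeq := stmt19_breg_eq hp hjp x y
  rw [← ha_def, ← hb_def] at hΔeq
  have hba : b ≤ a + ε := by
    calc b = ‖x - (x - y)‖ := by rw [sub_sub_cancel]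
      _ ≤ ‖x‖ + ‖x - y‖ := norm_sub_le _ _
  have hεab : ε ≤ a + b := norm_sub_le x y
  have hb0 : (0:ℝ) ≤ b := norm_nonneg y
  have hap : a ^ (p - 1) * a = a ^ p := stmt19_rpow_succ hp (norm_nonneg x)
  have hapos : (0:ℝ) < a ^ p := Real.rpow_pos_of_pos ha _
  have hap1 : (0:ℝ) < a ^ (p - 1) := Real.rpow_pos_of_pos ha _
  have hpsi_eq : a ^ p * stmtPsi p (b / a) =
      b ^ p / p + ((p - 1) / p) * a ^ p - a ^ (p - 1) * b := by
    simp only [stmtPsi]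
    rw [Real.div_rpow (norm_nonneg y) (norm_nonneg x), ← hap]
    field_simp
    ring
  rcases le_or_gt (ε / 2) |a - b| with hA | hB
  · -- Case A : use the scalar gap
    have hΔ1 : a ^ p * stmtPsi p (b / a) ≤
        breg (fun z : X => (1 / p) * ‖z‖ ^ p) (jp x) y x := by
      have hjple := stmt19_jp_le hjp x y
      rw [← ha_def, ← hb_def] at hjple
      rw [hΔeq, hpsi_eq]
      linarith [hjple]
    have hta : 0 ≤ b / a := div_nonneg hb0 ha.le
    have hpsi_lb : cA * (s * s) ≤ stmtPsi p (b / a) := by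
      have hmin0 : (0:ℝ) < min 1 (p - 1) := lt_min (by norm_num) (by linarith)
      have hM : (0:ℝ) < 16 * (1 + S / 2) := by linarith
      rcases le_or_gt (b / a) 1 with ht1 | ht1
      · have hb_le : b ≤ a := (div_le_one ha).mp ht1
        have habs : ε / 2 ≤ a - b := by
          rwa [abs_of_nonneg (by linarith)] at hA
        have h's : s / 2 ≤ 1 - b / a := by
          rw [hs_def]
          rw [div_div]
          rw [div_le_iff₀ (by linarith : (0:ℝ) < a * 2)]
          have : (1 - b / a) * (a * 2) = (a - b) * 2 := by field_simp
          rw [this]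
          linarith
        have hle := stmt19_psi_left hp (h := 1 - b / a) (by linarith) (by linarith)
        have h1mh : (1 : ℝ) - (1 - b / a) = b / a := by ring
        rw [h1mh] at hle
        have hcAle : cA ≤ min 1 (p - 1) / 16 := by
          rw [hcA_def]
          exact div_le_div_of_nonneg_left hmin0.le (by norm_num) (by linarith)
        have hss : s * s ≤ 4 * ((1 - b / a) * (1 - b / a)) := by
          have h2 := mul_self_le_mul_self (by positivity : (0:ℝ) ≤ s / 2) h's
          linarith [h2]
        calc cA * (s * s) ≤ min 1 (p - 1) / 16 * (s * s) :=
              mul_le_mul_of_nonneg_right hcAle (by positivity)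
          _ ≤ min 1 (p - 1) / 16 * (4 * ((1 - b / a) * (1 - b / a))) :=
              mul_le_mul_of_nonneg_left hss (by positivity)
          _ = min 1 (p - 1) * ((1 - b / a) * (1 - b / a)) / 4 := by ring
          _ ≤ stmtPsi p (b / a) := hle
      · have hab_lt : a < b := (one_lt_div ha).mp ht1
        have habs : ε / 2 ≤ b - a := by
          rw [abs_sub_comm, abs_of_nonneg (by linarith)] at hA
          exact hA
        obtain ⟨h', hh'_def⟩ : ∃ h' : ℝ, h' = b / a - 1 := ⟨_, rfl⟩
        have h'0 : 0 ≤ h' := by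
          rw [hh'_def]; rw [sub_nonneg]; exact ht1.le
        have h's : s / 2 ≤ h' := by
          rw [hs_def, hh'_def, div_div, div_le_iff₀ (by linarith : (0:ℝ) < a * 2)]
          have : (b / a - 1) * (a * 2) = (b - a) * 2 := by field_simp
          rw [this]
          linarith
        have h'S : h' ≤ S := by
          rw [hh'_def]
          have h1 : b / a ≤ (a + ε) / a := (div_le_div_iff_of_pos_right ha).mpr hba
          have h2 : (a + ε) / a = 1 + s := by
            rw [hs_def, add_div, div_self ha.ne']
          rw [h2] at h1
          linarith [hsS]
        have hpr := stmt19_psi_right hp h'0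
        have h1ph : (1 : ℝ) + h' = b / a := by rw [hh'_def]; ring
        rw [h1ph] at hpr
        have hψ0 : 0 ≤ stmtPsi p (b / a) := stmt19_psi_nonneg hp hta
        have hchain : (p - 1) * (h' * h') ≤ 4 * (1 + S / 2) * stmtPsi p (b / a) := by
          have := mul_le_mul_of_nonneg_right
            (by linarith : 4 * (1 + h' / 2) ≤ 4 * (1 + S / 2)) hψ0
          linarith
        have hmin_le : min 1 (p - 1) ≤ p - 1 := min_le_right _ _
        rw [hcA_def, div_mul_eq_mul_div, div_le_iff₀ hM]
        have hss : s * s ≤ 4 * (h' * h') := by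
          have h2 := mul_self_le_mul_self (by positivity : (0:ℝ) ≤ s / 2) h's
          linarith [h2]
        calc min 1 (p - 1) * (s * s) ≤ (p - 1) * (s * s) :=
              mul_le_mul_of_nonneg_right hmin_le (by positivity)
          _ ≤ (p - 1) * (4 * (h' * h')) := by
              apply mul_le_mul_of_nonneg_left hss (by linarith)
          _ = 4 * ((p - 1) * (h' * h')) := by ring
          _ ≤ 4 * (4 * (1 + S / 2) * stmtPsi p (b / a)) := by linarith [hchain]
          _ = stmtPsi p (b / a) * (16 * (1 + S / 2)) := by ring
    have hsr : S ^ ((2:ℝ) - r) * s ^ r ≤ s * s := by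
      have e2 : s ^ ((2:ℝ)) = s * s := by
        rw [Real.rpow_two]; ring
      have h1 : s ^ (r - 2) * s ^ ((2:ℝ)) = s ^ r := by
        rw [← Real.rpow_add hs]; norm_num
      have h2 : s ^ (r - 2) ≤ S ^ (r - 2) := Real.rpow_le_rpow hs.le hsS (by linarith)
      have h3 : S ^ ((2:ℝ) - r) * S ^ (r - 2) = 1 := by
        rw [← Real.rpow_add hS0]; norm_num
      have hS2 : (0:ℝ) ≤ S ^ ((2:ℝ) - r) := (Real.rpow_pos_of_pos hS0 _).le
      calc S ^ ((2:ℝ) - r) * s ^ r = S ^ ((2:ℝ) - r) * (s ^ (r - 2) * (s * s)) := by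
            rw [← e2, h1]
        _ ≤ S ^ ((2:ℝ) - r) * (S ^ (r - 2) * (s * s)) := by
            apply mul_le_mul_of_nonneg_left _ hS2
            exact mul_le_mul_of_nonneg_right h2 (by positivity)
        _ = S ^ ((2:ℝ) - r) * S ^ (r - 2) * (s * s) := by ring
        _ = s * s := by rw [h3, one_mul]
    have hsrpos : (0:ℝ) ≤ s ^ r := (Real.rpow_pos_of_pos hs _).le
    calc min CA CB * (a ^ (p - r) * ε ^ r)
        ≤ CA * (a ^ (p - r) * ε ^ r) := by
          apply mul_le_mul_of_nonneg_right (min_le_left _ _)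
          rw [hkey]; positivity
      _ = cA * (S ^ ((2:ℝ) - r) * s ^ r) * a ^ p := by rw [hkey, hCA_def]; ring
      _ ≤ cA * (s * s) * a ^ p := by
          apply mul_le_mul_of_nonneg_right _ hapos.le
          exact mul_le_mul_of_nonneg_left hsr hcA.le
      _ ≤ stmtPsi p (b / a) * a ^ p :=
          mul_le_mul_of_nonneg_right hpsi_lb hapos.le
      _ = a ^ p * stmtPsi p (b / a) := by ring
      _ ≤ _ := hΔ1
  · -- Case B : use the modulus of convexity
    have hb3 : a / 3 ≤ b := by
      rcases le_or_gt ε (4 / 3 * a) with h4 | h4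
      · have h5 : a - b ≤ |a - b| := le_abs_self _
        linarith [hB.le]
      · linarith [hεab]
    have hbpos : (0:ℝ) < b := lt_of_lt_of_le (by linarith) hb3
    have hy : y ≠ 0 := by
      rw [← norm_pos_iff]; exact hbpos
    set u := ‖x‖⁻¹ • x with hu_def
    set v := ‖y‖⁻¹ • y with hv_def
    set η := ‖u - v‖ with hη_def
    have hstrong := stmt19_jp_strong hp hΔ hjp hx hy
    rw [← ha_def, ← hb_def] at hstrong
    rw [← hu_def, ← hv_def, ← hη_def] at hstrong
    have hvnorm : ‖v‖ = 1 := by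
      rw [hv_def, norm_smul, norm_inv, norm_norm, inv_mul_cancel₀ hbpos.ne']
    have hxy_decomp : x - y = a • (u - v) + (a - b) • v := by
      rw [smul_sub, sub_smul, hu_def, hv_def, smul_smul, smul_smul, smul_smul]
      rw [mul_inv_cancel₀ ha.ne', mul_inv_cancel₀ hbpos.ne']
      simp [sub_smul, smul_sub]
    have hη_lb : ε ≤ a * η + |a - b| := by
      calc ε = ‖a • (u - v) + (a - b) • v‖ := by rw [hε_def, hxy_decomp]
        _ ≤ ‖a • (u - v)‖ + ‖(a - b) • v‖ := norm_add_le _ _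
        _ = a * η + |a - b| := by
            rw [norm_smul, norm_smul, hvnorm, mul_one, Real.norm_eq_abs,
              Real.norm_eq_abs, abs_of_pos ha]
    have hη2 : s / 2 ≤ η := by
      have hh : ε / 2 ≤ a * η := by linarith [hB.le]
      rw [hs_def, div_div, div_le_iff₀ (by linarith : (0:ℝ) < a * 2)]
      linarith [hh]
    have hΔ2 : 2 * K * (a ^ (p - 1) * b * η ^ r) ≤
        breg (fun z : X => (1 / p) * ‖z‖ ^ p) (jp x) y x := by
      rw [hΔeq]
      have hyoung := stmt19_young hp (t := b) (u := a) (norm_nonneg y) (norm_nonneg x)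
      linarith [hstrong, hyoung]
    have h1 : (s / 2) ^ r ≤ η ^ r :=
      Real.rpow_le_rpow (by positivity) hη2 (by linarith)
    have h2 : (s / 2) ^ r = s ^ r / 2 ^ r := Real.div_rpow hs.le (by norm_num : (0:ℝ) ≤ 2) r
    have hmono : CB * (a ^ p * s ^ r) ≤ 2 * K * (a ^ (p - 1) * b * η ^ r) := by
      have e : CB * (a ^ p * s ^ r) = 2 * K * (a ^ (p - 1) * (a / 3) * (s ^ r / 2 ^ r)) := by
        rw [hCB_def, ← hap]
        field_simp
      rw [e]
      have hsr0 : (0:ℝ) ≤ s ^ r / 2 ^ r := by positivity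
      have hstep : a ^ (p - 1) * (a / 3) * (s ^ r / 2 ^ r) ≤ a ^ (p - 1) * b * η ^ r := by
        have t1 : a ^ (p - 1) * (a / 3) ≤ a ^ (p - 1) * b :=
          mul_le_mul_of_nonneg_left hb3 hap1.le
        have t2 : s ^ r / 2 ^ r ≤ η ^ r := by rw [← h2]; exact h1
        calc a ^ (p - 1) * (a / 3) * (s ^ r / 2 ^ r)
            ≤ a ^ (p - 1) * b * (s ^ r / 2 ^ r) :=
              mul_le_mul_of_nonneg_right t1 hsr0
          _ ≤ a ^ (p - 1) * b * η ^ r := by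
              apply mul_le_mul_of_nonneg_left t2
              positivity
      linarith [mul_le_mul_of_nonneg_left hstep (by linarith : (0:ℝ) ≤ 2 * K)]
    calc min CA CB * (a ^ (p - r) * ε ^ r)
        ≤ CB * (a ^ (p - r) * ε ^ r) := by
          apply mul_le_mul_of_nonneg_right (min_le_right _ _)
          rw [hkey]; positivity
      _ = CB * (a ^ p * s ^ r) := by rw [hkey]
      _ ≤ 2 * K * (a ^ (p - 1) * b * η ^ r) := hmono
      _ ≤ _ := hΔ2

lemma stmt19_far {p : ℝ} (hp2 : 2 ≤ p) {jp : X → X →L[ℝ] ℝ}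
    (hjp : ∀ x : X, jp x x = ‖jp x‖ * ‖x‖ ∧ ‖jp x‖ = ‖x‖ ^ (p - 1))
    {x y : X} (hx : x ≠ 0) (hfar : 4 * ‖x‖ < ‖x - y‖) :
    (1 / p - 3 ^ ((1:ℝ) - p)) * (3 / 4) ^ p * ‖x - y‖ ^ p ≤
      breg (fun z : X => (1 / p) * ‖z‖ ^ p) (jp x) y x := by
  have hp : 1 < p := by linarith
  have ha : 0 < ‖x‖ := norm_pos_iff.mpr hx
  have hεab : ‖x - y‖ ≤ ‖x‖ + ‖y‖ := norm_sub_le x y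
  have hb1 : 3 * ‖x‖ ≤ ‖y‖ := by linarith
  have hb2 : (3:ℝ) / 4 * ‖x - y‖ ≤ ‖y‖ := by linarith
  have hap : ‖x‖ ^ (p - 1) * ‖x‖ = ‖x‖ ^ p := stmt19_rpow_succ hp (norm_nonneg x)
  have hapos : (0:ℝ) < ‖x‖ ^ p := Real.rpow_pos_of_pos ha _
  have hpsi_eq : ‖x‖ ^ p * stmtPsi p (‖y‖ / ‖x‖) =
      ‖y‖ ^ p / p + ((p - 1) / p) * ‖x‖ ^ p - ‖x‖ ^ (p - 1) * ‖y‖ := by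
    simp only [stmtPsi]
    rw [Real.div_rpow (norm_nonneg y) (norm_nonneg x), ← hap]
    field_simp
  have hΔ1 : ‖x‖ ^ p * stmtPsi p (‖y‖ / ‖x‖) ≤
      breg (fun z : X => (1 / p) * ‖z‖ ^ p) (jp x) y x := by
    rw [stmt19_breg_eq hp hjp x y, hpsi_eq]
    linarith [stmt19_jp_le hjp x y]
  have ht3 : (3:ℝ) ≤ ‖y‖ / ‖x‖ := (le_div_iff₀ ha).mpr (by linarith)
  have hbig := stmt19_psi_big hp2 ht3
  set c2 := 1 / p - 3 ^ ((1:ℝ) - p) with hc2_def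
  have hc2 : 0 < c2 := stmt19_c2_pos hp2
  have hdiv : (‖y‖ / ‖x‖) ^ p = ‖y‖ ^ p / ‖x‖ ^ p :=
    Real.div_rpow (norm_nonneg y) (norm_nonneg x) p
  have hstep1 : c2 * ‖y‖ ^ p ≤ ‖x‖ ^ p * stmtPsi p (‖y‖ / ‖x‖) := by
    have h1 := mul_le_mul_of_nonneg_left hbig hapos.le
    rw [hdiv] at h1
    have h2 : ‖x‖ ^ p * (c2 * (‖y‖ ^ p / ‖x‖ ^ p)) = c2 * ‖y‖ ^ p := by
      field_simp
    linarith [h1, h2.symm.le]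
  have hstep2 : (3 / 4 : ℝ) ^ p * ‖x - y‖ ^ p ≤ ‖y‖ ^ p := by
    have h1 : ((3:ℝ) / 4 * ‖x - y‖) ^ p ≤ ‖y‖ ^ p :=
      Real.rpow_le_rpow (by positivity) hb2 (by linarith)
    rwa [Real.mul_rpow (by norm_num) (norm_nonneg _)] at h1
  calc c2 * (3 / 4 : ℝ) ^ p * ‖x - y‖ ^ p
      = c2 * ((3 / 4 : ℝ) ^ p * ‖x - y‖ ^ p) := by ring
    _ ≤ c2 * ‖y‖ ^ p := mul_le_mul_of_nonneg_left hstep2 hc2.le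
    _ ≤ ‖x‖ ^ p * stmtPsi p (‖y‖ / ‖x‖) := hstep1
    _ ≤ _ := hΔ1


end Stmt19Vec

/-- if `X` is `r`-convex for some `r ∈ [2,∞)` and `F = (1/p)‖·‖^p`, then:
if `p = r` there is `C > 0` with `Δ_F^{j_p(x)}(y,x) ≥ C‖x−y‖^r` for all `x, y`; and if
`p ≠ r` then for every `τ̄ > 0` there is `C > 0` with
`Δ_F^{j_p(x)}(y,x) ≥ C‖x‖^{p−r}‖x−y‖^r` whenever `x ≠ 0` and `‖x−y‖ ≤ τ̄‖x‖`. -/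
theorem stmt19 (X : Type*) [NormedAddCommGroup X] [NormedSpace ℝ X] [CompleteSpace X]
    (hdim : 2 ≤ Module.rank ℝ X)
    (r : ℝ) (hr : 2 ≤ r)
    (hconvex : ∃ K : ℝ, 0 < K ∧ ∀ ε : ℝ, 0 ≤ ε → ε ≤ 2 → K * ε ^ r ≤ deltaSpace X ε)
    (p : ℝ) (hp : 1 < p)
    (jp : X → X →L[ℝ] ℝ) (hjp : IsDualitySelection p jp) :
    (p = r → ∃ C : ℝ, 0 < C ∧ ∀ x y : X,
      C * ‖x - y‖ ^ r ≤ breg (fun z : X => (1 / p) * ‖z‖ ^ p) (jp x) y x) ∧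
    (p ≠ r → ∀ τbar : ℝ, 0 < τbar → ∃ C : ℝ, 0 < C ∧
      ∀ x y : X, x ≠ 0 → ‖x - y‖ ≤ τbar * ‖x‖ →
        C * ‖x‖ ^ (p - r) * ‖x - y‖ ^ r ≤
          breg (fun z : X => (1 / p) * ‖z‖ ^ p) (jp x) y x) := by
  obtain ⟨K, hK, hΔ⟩ := hconvex
  have hjp' : ∀ x : X, jp x x = ‖jp x‖ * ‖x‖ ∧ ‖jp x‖ = ‖x‖ ^ (p - 1) := hjp
  have hp0 : (0:ℝ) < p := by linarith
  constructor
  · -- p = r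
    intro hpr
    subst hpr
    obtain ⟨C₀, hC₀, hcore⟩ := stmt19_core hp hr hK hΔ hjp' (S := 4) (by norm_num)
    have hc2 : 0 < 1 / p - 3 ^ ((1:ℝ) - p) := stmt19_c2_pos hr
    have h34 : (0:ℝ) < (3 / 4 : ℝ) ^ p := Real.rpow_pos_of_pos (by norm_num) _
    refine ⟨min C₀ (min (1 / p) ((1 / p - 3 ^ ((1:ℝ) - p)) * (3 / 4) ^ p)), ?_, ?_⟩
    · exact lt_min hC₀ (lt_min (by positivity) (mul_pos hc2 h34))
    · intro x y
      set C := min C₀ (min (1 / p) ((1 / p - 3 ^ ((1:ℝ) - p)) * (3 / 4) ^ p)) with hC_def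
      have hCp : C ≤ 1 / p := le_trans (min_le_right _ _) (min_le_left _ _)
      have hCc : C ≤ (1 / p - 3 ^ ((1:ℝ) - p)) * (3 / 4) ^ p :=
        le_trans (min_le_right _ _) (min_le_right _ _)
      by_cases hx : x = 0
      · subst hx
        have hjp0 : jp 0 = 0 := by
          have h := (hjp' 0).2
          rw [norm_zero, Real.zero_rpow (by intro h'; linarith [sub_eq_zero.mp h'])] at h
          exact norm_eq_zero.mp h
        simp only [breg, hjp0, ContinuousLinearMap.zero_apply, norm_zero, zero_sub, norm_neg,
          sub_zero]
        rw [Real.zero_rpow (ne_of_gt hp0), mul_zero, sub_zero]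
        have := mul_le_mul_of_nonneg_right hCp (Real.rpow_nonneg (norm_nonneg y) p)
        calc C * ‖y‖ ^ p ≤ 1 / p * ‖y‖ ^ p := this
          _ = 1 / p * ‖y‖ ^ p := rfl
      · by_cases hxy : x = y
        · subst hxy
          simp only [breg, sub_self, norm_zero, map_zero, sub_zero]
          norm_num [Real.zero_rpow (ne_of_gt hp0)]
        · have hε : 0 < ‖x - y‖ := by
            rw [norm_pos_iff]
            exact sub_ne_zero.mpr hxy
          rcases le_or_gt ‖x - y‖ (4 * ‖x‖) with h4 | h4
          · have hc := hcore x y hx hε h4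
            rw [sub_self, Real.rpow_zero, one_mul] at hc
            calc C * ‖x - y‖ ^ p ≤ C₀ * ‖x - y‖ ^ p :=
                  mul_le_mul_of_nonneg_right (min_le_left _ _)
                    (Real.rpow_nonneg (norm_nonneg _) _)
              _ ≤ _ := hc
          · have hf := stmt19_far hr hjp' hx h4
            calc C * ‖x - y‖ ^ p
                ≤ (1 / p - 3 ^ ((1:ℝ) - p)) * (3 / 4) ^ p * ‖x - y‖ ^ p :=
                  mul_le_mul_of_nonneg_right hCc (Real.rpow_nonneg (norm_nonneg _) _)
              _ ≤ _ := hf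
  · -- p ≠ r
    intro _ τbar hτ
    obtain ⟨C₀, hC₀, hcore⟩ := stmt19_core hp hr hK hΔ hjp' (S := max τbar 1) (le_max_right _ _)
    refine ⟨C₀, hC₀, fun x y hx hτxy => ?_⟩
    by_cases hxy : x = y
    · subst hxy
      simp only [breg, sub_self, norm_zero, map_zero, sub_zero]
      norm_num [Real.zero_rpow (show r ≠ 0 by intro h; rw [h] at hr; norm_num at hr)]
    · have hε : 0 < ‖x - y‖ := by
        rw [norm_pos_iff]
        exact sub_ne_zero.mpr hxy
      have hle : ‖x - y‖ ≤ max τbar 1 * ‖x‖ :=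
        le_trans hτxy (mul_le_mul_of_nonneg_right (le_max_left _ _) (norm_nonneg x))
      have hc := hcore x y hx hε hle
      calc C₀ * ‖x‖ ^ (p - r) * ‖x - y‖ ^ r
          = C₀ * (‖x‖ ^ (p - r) * ‖x - y‖ ^ r) := by ring
        _ ≤ _ := hc
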